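/- A distance space X is injective (meaning: for every isometry i : X → Y into a distance space Y there is a non-expanding r : Y → X with r ∘ i = id_X) if and only if there exists a non-expanding map r : EX → X such that r ∘ e_X is the identity of X, where e_X : X → EX is the canonical isometric embedding into the injective envelope. -/

import Mathlib

open scoped ENNReal

universe u

structure DistSpace (X : Type u) where
  d : X → X → ℝ≥0∞
  refl : ∀ x, d x x = 0
  symm : ∀ x y, d x y = d y x
  triangle : ∀ x y z, d x z ≤ d x y + d y z

def Delta {X : Type u} (D : DistSpace X) : Set (X → ℝ≥0∞) :=
  {f | ∀ x y, D.d x y ≤ f x + f y}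

def Extremal {X : Type u} (D : DistSpace X) (f : X → ℝ≥0∞) : Prop :=
  f ∈ Delta D ∧ ∀ g ∈ Delta D, g ≤ f → g = f

noncomputable def supDist {X : Type u} (f g : X → ℝ≥0∞) : ℝ≥0∞ :=
  ⨆ x, (f x - g x) ⊔ (g x - f x)

theorem extremal_ddist {X : Type u} (D : DistSpace X) (x : X) :
    Extremal D (fun z => D.d x z) := by
  constructor
  · intro y z
    calc D.d y z ≤ D.d y x + D.d x z := D.triangle y x z
    _ = D.d x y + D.d x z := by rw [D.symm y x]
  · intro g hg hle
    funext z
    have hx : g x = 0 := le_antisymm (by simpa [D.refl] using hle x) zero_le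
    have h1 : D.d x z ≤ g z := by simpa [hx] using hg x z
    exact le_antisymm (hle z) h1

/-- The injective envelope `EX` of a distance space `X`: the set of extremal
functions, with the sup-distance. -/
def EnvType {X : Type u} (D : DistSpace X) : Type u :=
  {f : X → ℝ≥0∞ // Extremal D f}

/-- The canonical isometric embedding `e_X : X → EX`, `x ↦ d_X(x,·)`. -/
noncomputable def eEnv {X : Type u} (D : DistSpace X) (x : X) : EnvType D :=
  ⟨fun z => D.d x z, extremal_ddist D x⟩

section Aux
variable {X : Type u} {D : DistSpace X}

lemma le_add_supDist (f g : X → ℝ≥0∞) (x : X) : f x ≤ g x + supDist f g := by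
  have h1 : f x - g x ≤ supDist f g := le_iSup_of_le x le_sup_left
  calc f x ≤ f x - g x + g x := le_tsub_add
  _ ≤ supDist f g + g x := by gcongr
  _ = g x + supDist f g := add_comm _ _

lemma supDist_le {f g : X → ℝ≥0∞} {c : ℝ≥0∞} (h : ∀ x, f x ≤ g x + c)
    (h' : ∀ x, g x ≤ f x + c) : supDist f g ≤ c := by
  refine iSup_le fun x => sup_le ?_ ?_
  · exact tsub_le_iff_right.2 (by rw [add_comm]; exact h x)
  · exact tsub_le_iff_right.2 (by rw [add_comm]; exact h' x)

lemma supDist_self (f : X → ℝ≥0∞) : supDist f f = 0 := by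
  simp [supDist]

lemma supDist_comm (f g : X → ℝ≥0∞) : supDist f g = supDist g f := by
  simp [supDist, sup_comm]

lemma supDist_triangle (f g h : X → ℝ≥0∞) :
    supDist f h ≤ supDist f g + supDist g h := by
  refine supDist_le (fun x => ?_) (fun x => ?_)
  · calc f x ≤ g x + supDist f g := le_add_supDist f g x
    _ ≤ (h x + supDist g h) + supDist f g := by gcongr; exact le_add_supDist g h x
    _ = h x + (supDist f g + supDist g h) := by ring
  · calc h x ≤ g x + supDist h g := le_add_supDist h g x
    _ ≤ (f x + supDist g f) + supDist h g := by gcongr; exact le_add_supDist g f x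
    _ = f x + (supDist f g + supDist g h) := by
        rw [supDist_comm g f, supDist_comm h g]; ring

lemma eq_of_supDist_eq_zero {f g : X → ℝ≥0∞} (h : supDist f g = 0) : f = g := by
  funext x
  have h1 : (f x - g x) ⊔ (g x - f x) ≤ 0 := by
    rw [← h]
    exact le_iSup (fun x => (f x - g x) ⊔ (g x - f x)) x
  have h2 : f x - g x = 0 := le_antisymm (le_trans le_sup_left h1) zero_le
  have h3 : g x - f x = 0 := le_antisymm (le_trans le_sup_right h1) zero_le
  exact le_antisymm (tsub_eq_zero_iff_le.1 h2) (tsub_eq_zero_iff_le.1 h3)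

/-- helper: a lower bound of all pairwise sums bounds the sum of infima. -/
lemma le_iInf_add_iInf' {ι κ : Sort*} {f : ι → ℝ≥0∞} {g : κ → ℝ≥0∞} {a : ℝ≥0∞}
    (h : ∀ i j, a ≤ f i + g j) : a ≤ (⨅ i, f i) + ⨅ j, g j := by
  rw [ENNReal.iInf_add]
  refine le_iInf fun i => ?_
  rw [ENNReal.add_iInf]
  exact le_iInf fun j => h i j

/-- Every member of `Delta` has an extremal function below it. -/
lemma exists_extremal_le {f : X → ℝ≥0∞} (hf : f ∈ Delta D) :
    ∃ g, Extremal D g ∧ g ≤ f := by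
  set s : Set (X → ℝ≥0∞)ᵒᵈ :=
    {g : (X → ℝ≥0∞)ᵒᵈ | OrderDual.ofDual g ∈ Delta D ∧ OrderDual.ofDual g ≤ f} with hs
  have hchain : ∀ c ⊆ s, IsChain (· ≤ ·) c → ∀ y ∈ c, ∃ ub ∈ s, ∀ z ∈ c, z ≤ ub := by
    intro c hc hchain y hy
    refine ⟨OrderDual.toDual (fun x => ⨅ g : c, OrderDual.ofDual (g : (X → ℝ≥0∞)ᵒᵈ) x),
      ⟨fun x z => ?_, fun x => ?_⟩, fun g hg => ?_⟩
    · refine le_iInf_add_iInf' fun i j => ?_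
      rcases hchain.total i.2 j.2 with h | h
      · calc D.d x z ≤ OrderDual.ofDual (j : (X → ℝ≥0∞)ᵒᵈ) x
              + OrderDual.ofDual (j : (X → ℝ≥0∞)ᵒᵈ) z := (hc j.2).1 x z
        _ ≤ _ + OrderDual.ofDual (j : (X → ℝ≥0∞)ᵒᵈ) z := by
            gcongr
            exact h x
      · calc D.d x z ≤ OrderDual.ofDual (i : (X → ℝ≥0∞)ᵒᵈ) x
              + OrderDual.ofDual (i : (X → ℝ≥0∞)ᵒᵈ) z := (hc i.2).1 x z
        _ ≤ OrderDual.ofDual (i : (X → ℝ≥0∞)ᵒᵈ) x + _ := by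
            gcongr
            exact h z
    · exact le_trans (iInf_le _ (⟨y, hy⟩ : c)) ((hc hy).2 x)
    · intro x
      exact iInf_le (fun g : c => OrderDual.ofDual (g : (X → ℝ≥0∞)ᵒᵈ) x) (⟨g, hg⟩ : c)
  obtain ⟨m, hfm, hmem, hmax⟩ :=
    zorn_le_nonempty₀ (α := (X → ℝ≥0∞)ᵒᵈ) s hchain (OrderDual.toDual f) ⟨hf, le_rfl⟩
  refine ⟨OrderDual.ofDual m, ⟨hmem.1, fun g hg hgle => ?_⟩, hmem.2⟩
  have hgs : OrderDual.toDual g ∈ s := ⟨hg, le_trans hgle hmem.2⟩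
  have h1 : m ≤ OrderDual.toDual g := hgle
  have h2 : OrderDual.toDual g ≤ m := hmax hgs h1
  exact le_antisymm hgle h2

/-- An extremal function cannot be lowered at a point. -/
lemma Extremal.le_of_forall {f : X → ℝ≥0∞} (hf : Extremal D f) (x : X) (b : ℝ≥0∞)
    (hb : ∀ y, D.d x y ≤ b + f y) : f x ≤ b := by
  classical
  let g : X → ℝ≥0∞ := fun z => if z = x then b ⊓ f x else f z
  have gx : g x = b ⊓ f x := if_pos rfl
  have gne : ∀ z, z ≠ x → g z = f z := fun z hz => if_neg hz
  have key : ∀ w, D.d x w ≤ (b ⊓ f x) + f w := fun w => by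
    rcases le_total b (f x) with h | h
    · rw [inf_eq_left.2 h]; exact hb w
    · rw [inf_eq_right.2 h]; exact hf.1 x w
  have hgD : g ∈ Delta D := by
    intro z w
    by_cases hz : z = x <;> by_cases hw : w = x
    · rw [hz, hw, D.refl]; exact zero_le
    · rw [hz, gx, gne w hw]; exact key w
    · rw [hw, gne z hz, gx, D.symm z x, add_comm]; exact key z
    · rw [gne z hz, gne w hw]; exact hf.1 z w
  have hgle : g ≤ f := by
    intro z
    by_cases hz : z = x
    · rw [hz, gx]; exact inf_le_right
    · rw [gne z hz]
  have heq := hf.2 g hgD hgle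
  have hbf : b ⊓ f x = f x := by rw [← gx, heq]
  exact inf_eq_right.1 hbf

/-- `e` is Katetov-like: distance from an extremal function to `e x` is `f x`. -/
lemma supDist_eEnv {f : X → ℝ≥0∞} (hf : Extremal D f) (x : X) :
    supDist f (fun z => D.d x z) = f x := by
  refine le_antisymm (supDist_le (fun z => ?_) (fun z => ?_)) ?_
  · -- f z ≤ d x z + f x
    show f z ≤ D.d x z + f x
    refine hf.le_of_forall z (D.d x z + f x) fun y => ?_
    calc D.d z y ≤ D.d z x + D.d x y := D.triangle z x y
    _ ≤ D.d z x + (f x + f y) := by gcongr; exact hf.1 x y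
    _ = D.d x z + f x + f y := by rw [D.symm z x]; ring
  · show D.d x z ≤ f z + f x
    exact (hf.1 x z).trans (le_of_eq (add_comm _ _))
  · have : f x - D.d x x ≤ supDist f (fun z => D.d x z) :=
      le_iSup_of_le x le_sup_left
    simpa [D.refl] using this

lemma supDist_ddist (x y : X) :
    supDist (fun z => D.d x z) (fun z => D.d y z) = D.d x y := by
  simpa using supDist_eEnv (extremal_ddist D x) y

/-- Hyperconvexity-style lemma for the envelope. -/
lemma exists_extremal_balls {ι : Type u} (h : ι → X → ℝ≥0∞)
    (hex : ∀ i, Extremal D (h i)) (ρ : ι → ℝ≥0∞)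
    (hρ : ∀ i j, supDist (h i) (h j) ≤ ρ i + ρ j) :
    ∃ g, Extremal D g ∧ ∀ i, supDist g (h i) ≤ ρ i := by
  set F : X → ℝ≥0∞ := fun x => ⨅ i, (h i x + ρ i) with hF
  have hFD : F ∈ Delta D := by
    intro x y
    refine le_iInf_add_iInf' fun i j => ?_
    calc D.d x y ≤ h j x + h j y := (hex j).1 x y
    _ ≤ (h i x + supDist (h j) (h i)) + h j y := by gcongr; exact le_add_supDist _ _ x
    _ ≤ (h i x + (ρ j + ρ i)) + h j y := by gcongr; exact hρ j i
    _ = h i x + ρ i + (h j y + ρ j) := by ring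
  obtain ⟨g, hg, hgle⟩ := exists_extremal_le hFD
  have hup : ∀ i x, g x ≤ h i x + ρ i := fun i x => le_trans (hgle x) (iInf_le _ i)
  refine ⟨g, hg, fun i => supDist_le (hup i) fun x => ?_⟩
  refine (hex i).le_of_forall x (g x + ρ i) fun y => ?_
  calc D.d x y ≤ g x + g y := hg.1 x y
  _ ≤ g x + (h i y + ρ i) := by gcongr; exact hup i y
  _ = g x + ρ i + h i y := by ring

end Aux

/-- A distance space `X` is injective iff there is a non-expanding retraction
`r : EX → X` with `r ∘ e_X = id_X`. -/
theorem stmt7 {X : Type u} (D : DistSpace X) :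
    (∀ (Y : Type u) (DY : DistSpace Y) (i : X → Y),
        (∀ a b, DY.d (i a) (i b) = D.d a b) →
        ∃ r : Y → X, (∀ a b, D.d (r a) (r b) ≤ DY.d a b) ∧ ∀ x, r (i x) = x) ↔
    (∃ r : EnvType D → X,
        (∀ f g : EnvType D, D.d (r f) (r g) ≤ supDist f.1 g.1) ∧
        ∀ x, r (eEnv D x) = x) := by
  constructor
  · intro H
    set DE : DistSpace (EnvType D) :=
      { d := fun f g => supDist f.1 g.1
        refl := fun f => supDist_self f.1
        symm := fun f g => supDist_comm f.1 g.1
        triangle := fun f g h => supDist_triangle f.1 g.1 h.1 } with hDE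
    obtain ⟨r, hr1, hr2⟩ := H (EnvType D) DE (eEnv D) (fun a b => supDist_ddist a b)
    exact ⟨r, fun f g => hr1 f g, hr2⟩
  · rintro ⟨r, hr1, hr2⟩ Y DY i hi
    -- good relations: partial non-expanding maps extending eEnv ∘ i⁻¹
    set S : Set (Set (Y × EnvType D)) :=
      {c | (∀ x : X, (i x, eEnv D x) ∈ c) ∧
        ∀ p ∈ c, ∀ q ∈ c, supDist (p.2 : EnvType D).1 (q.2 : EnvType D).1 ≤
          DY.d p.1 q.1} with hS
    have hc0 : {p : Y × EnvType D | ∃ x, p = (i x, eEnv D x)} ∈ S := by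
      constructor
      · intro x; exact ⟨x, rfl⟩
      · rintro p ⟨a, rfl⟩ q ⟨b, rfl⟩
        simp only
        rw [hi a b, show ((eEnv D a).1 = fun z => D.d a z) from rfl,
          show ((eEnv D b).1 = fun z => D.d b z) from rfl, supDist_ddist]
    have hchainS : ∀ c ⊆ S, IsChain (· ⊆ ·) c → c.Nonempty →
        ∃ ub ∈ S, ∀ s ∈ c, s ⊆ ub := by
      intro c hcS hchain hne
      refine ⟨⋃₀ c, ⟨fun x => ?_, ?_⟩, fun s hs => Set.subset_sUnion_of_mem hs⟩
      · obtain ⟨s, hs⟩ := hne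
        exact Set.mem_sUnion.2 ⟨s, hs, (hcS hs).1 x⟩
      · rintro p ⟨s, hs, hps⟩ q ⟨t, ht, hqt⟩
        rcases hchain.total hs ht with h | h
        · exact (hcS ht).2 p (h hps) q hqt
        · exact (hcS hs).2 p hps q (h hqt)
    obtain ⟨M, hM0, hM, hMmax⟩ := zorn_subset_nonempty S hchainS _ hc0
    · -- M is total: every y has a partner
      have htotal : ∀ y : Y, ∃ f : EnvType D, (y, f) ∈ M := by
        intro y
        by_contra hno
        push_neg at hno
        -- build an extremal function compatible with all of M using hyperconvexity
        obtain ⟨g, hg, hgball⟩ := exists_extremal_balls (D := D) (ι := M)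
          (fun p => (p.1.2 : EnvType D).1) (fun p => p.1.2.2)
          (fun p => DY.d y p.1.1) (fun p q => by
            calc supDist (p.1.2 : EnvType D).1 (q.1.2 : EnvType D).1
                ≤ DY.d p.1.1 q.1.1 := hM.2 p.1 p.2 q.1 q.2
            _ ≤ DY.d p.1.1 y + DY.d y q.1.1 := DY.triangle _ y _
            _ = DY.d y p.1.1 + DY.d y q.1.1 := by rw [DY.symm p.1.1 y])
        have hnew : insert (y, (⟨g, hg⟩ : EnvType D)) M ∈ S := by
          constructor
          · intro x; exact Set.mem_insert_of_mem _ (hM.1 x)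
          · rintro p (rfl | hp) q (rfl | hq)
            · simp [DY.refl, supDist_self]
            · exact le_trans (hgball ⟨q, hq⟩) le_rfl
            · rw [supDist_comm, DY.symm]
              exact hgball ⟨p, hp⟩
            · exact hM.2 p hp q hq
          -- done
        have := hMmax hnew (Set.subset_insert _ _)
        exact hno _ (this (Set.mem_insert _ _))
      choose s hsM using htotal
      -- s(i x) = eEnv x
      have hsix : ∀ x, s (i x) = eEnv D x := by
        intro x
        have h0 : supDist (s (i x)).1 (eEnv D x).1 ≤ DY.d (i x) (i x) :=
          hM.2 (i x, s (i x)) (hsM (i x)) (i x, eEnv D x) (hM.1 x)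
        rw [DY.refl] at h0
        have := eq_of_supDist_eq_zero (le_antisymm h0 zero_le)
        exact Subtype.ext this
      refine ⟨fun y => r (s y), fun a b => ?_, fun x => ?_⟩
      · calc D.d (r (s a)) (r (s b)) ≤ supDist (s a).1 (s b).1 := hr1 _ _
        _ ≤ DY.d a b := hM.2 (a, s a) (hsM a) (b, s b) (hsM b)
      · show r (s (i x)) = x
        rw [hsix x, hr2 x]
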